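/- For the Hermite weight $w_H(t) = e^{-t^2}$ on $\mathbb{R}$, every polynomial $p$ of degree at most $n$ satisfies $\int_{\mathbb{R}} e^{-t^2} |p'(t)|^2\, dt \le 2n \int_{\mathbb{R}} e^{-t^2} |p(t)|^2\, dt$, and equality is attained for $p = H_n$, the $n$-th Hermite polynomial. -/

import Mathlib

open Polynomial MeasureTheory Filter Real Asymptotics Topology

/-- The physicists' Hermite polynomials: `H₀ = 1`, `H₁ = 2x`,
`H_{n+1} = 2x Hₙ - 2n H_{n-1}`. -/
noncomputable def physHermite : ℕ → Polynomial ℝ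
  | 0 => 1
  | 1 => 2 * X
  | (n + 2) => 2 * X * physHermite (n + 1) - C (2 * (n + 1) : ℝ) * physHermite n

lemma physHermite_succ_succ (n : ℕ) :
    physHermite (n + 2) = 2 * X * physHermite (n + 1) - C (2 * (n + 1) : ℝ) * physHermite n := rfl

lemma physHermite_deriv : ∀ n : ℕ,
    derivative (physHermite (n + 1)) = C (2 * (n + 1) : ℝ) * physHermite n
  | 0 => by
    show derivative (2 * X) = _
    simp [physHermite, map_ofNat]
  | 1 => by
    rw [physHermite_succ_succ]
    simp only [derivative_sub, derivative_mul, derivative_C, derivative_X, derivative_ofNat]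
    show _ = C (2 * ((1:ℕ) + 1) : ℝ) * (2 * X)
    push_cast
    simp [physHermite, map_ofNat]
    ring
  | (n + 2) => by
    have ih1 := physHermite_deriv (n + 1)
    have ih0 := physHermite_deriv n
    rw [show (n+2+1) = (n+1)+2 from rfl, physHermite_succ_succ (n+1)]
    simp only [derivative_sub, derivative_mul, derivative_C, derivative_X, derivative_ofNat,
      ih1, ih0]
    rw [physHermite_succ_succ n]
    simp only [map_mul, map_add, map_one, map_ofNat, Polynomial.C_eq_natCast]
    push_cast
    ring

lemma physHermite_rec : ∀ n : ℕ,
    physHermite (n + 1) = 2 * X * physHermite n - derivative (physHermite n)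
  | 0 => by simp [physHermite]
  | (n + 1) => by rw [physHermite_succ_succ, physHermite_deriv]

lemma physHermite_natDegree_coeff : ∀ n : ℕ,
    (physHermite n).natDegree ≤ n ∧ (physHermite n).coeff n = 2 ^ n
  | 0 => by simp [physHermite]
  | 1 => by
    constructor
    · show natDegree (2 * X) ≤ 1
      exact (natDegree_mul_le).trans (by simp)
    · show coeff (2 * X) 1 = 2 ^ 1
      simp [coeff_X, mul_comm]
  | (n + 2) => by
    obtain ⟨hd1, hc1⟩ := physHermite_natDegree_coeff (n + 1)
    obtain ⟨hd0, hc0⟩ := physHermite_natDegree_coeff n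
    rw [physHermite_succ_succ]
    constructor
    · refine (natDegree_sub_le _ _).trans (max_le ?_ ?_)
      · refine (natDegree_mul_le).trans ?_
        have : natDegree (2 * X : Polynomial ℝ) ≤ 1 := (natDegree_mul_le).trans (by simp)
        omega
      · refine (natDegree_mul_le).trans ?_
        simp only [natDegree_C, zero_add]
        omega
    · rw [coeff_sub, mul_assoc, coeff_ofNat_mul, show n+2 = (n+1)+1 from rfl, coeff_X_mul,
        hc1, coeff_C_mul, coeff_eq_zero_of_natDegree_lt (hd0.trans_lt (by omega))]
      ring

lemma gauss_poly_tendsto_atTop (p : Polynomial ℝ) {b : ℝ} (hb : 0 < b) :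
    Tendsto (fun t : ℝ => Real.exp (-b * t ^ 2) * p.eval t) atTop (𝓝 0) := by
  apply squeeze_zero_norm' (a := fun t : ℝ => |p.eval t / Real.exp t|)
  · filter_upwards [eventually_ge_atTop (max 1 b⁻¹)] with t ht
    have h1 : (1:ℝ) ≤ t := le_trans (le_max_left _ _) ht
    have h2 : b⁻¹ ≤ t := le_trans (le_max_right _ _) ht
    have hbt : 1 ≤ b * t := by
      rw [← mul_inv_cancel₀ (ne_of_gt hb)]
      exact mul_le_mul_of_nonneg_left h2 hb.le
    have hexp : Real.exp (-b * t ^ 2) ≤ Real.exp (-t) := by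
      apply Real.exp_le_exp.2
      nlinarith
    rw [abs_div, Real.abs_exp, norm_mul, Real.norm_eq_abs, Real.abs_exp, div_eq_mul_inv,
      ← Real.exp_neg, mul_comm (|p.eval t|), Real.norm_eq_abs]
    exact mul_le_mul_of_nonneg_right hexp (abs_nonneg _)
  · have := (p.tendsto_div_exp_atTop).abs
    simpa using this

lemma gauss_poly_tendsto_cocompact (p : Polynomial ℝ) {b : ℝ} (hb : 0 < b) :
    Tendsto (fun t : ℝ => Real.exp (-b * t ^ 2) * p.eval t) (cocompact ℝ) (𝓝 0) := by
  rw [cocompact_eq_atBot_atTop, tendsto_sup]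
  constructor
  · have h := (gauss_poly_tendsto_atTop (p.comp (-X)) hb).comp tendsto_neg_atBot_atTop
    refine h.congr fun t => ?_
    simp [Function.comp, eval_comp]
  · exact gauss_poly_tendsto_atTop p hb

lemma integrable_gauss_poly (p : Polynomial ℝ) :
    Integrable fun t : ℝ => Real.exp (-t ^ 2) * p.eval t := by
  have hc : Continuous fun t : ℝ => Real.exp (-t ^ 2) * p.eval t :=
    (Real.continuous_exp.comp (continuous_pow 2).neg).mul p.continuous
  apply hc.locallyIntegrable.integrable_of_isBigO_cocompact
    (g := fun t : ℝ => Real.exp (-(1/2 : ℝ) * t ^ 2))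
  · have h0 : (fun t : ℝ => Real.exp (-(1/2 : ℝ) * t ^ 2) * p.eval t) =O[cocompact ℝ]
        (fun _ : ℝ => (1 : ℝ)) := (gauss_poly_tendsto_cocompact p (by norm_num)).isBigO_one ℝ
    have h1 := h0.mul (isBigO_refl (fun t : ℝ => Real.exp (-(1/2 : ℝ) * t ^ 2)) (cocompact ℝ))
    refine (h1.congr (fun t => ?_) (fun t => one_mul _))
    rw [mul_comm, ← mul_assoc, ← Real.exp_add]
    ring_nf
  · exact (integrable_exp_neg_mul_sq (by norm_num : (0:ℝ) < 1/2)).integrableAtFilter _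

/-- The Gaussian-weighted integral of a polynomial. -/
noncomputable def gint (p : Polynomial ℝ) : ℝ := ∫ t : ℝ, Real.exp (-t ^ 2) * p.eval t

lemma gint_add (p q : Polynomial ℝ) : gint (p + q) = gint p + gint q := by
  unfold gint
  simp_rw [eval_add, mul_add]
  exact integral_add (integrable_gauss_poly p) (integrable_gauss_poly q)

lemma gint_sub (p q : Polynomial ℝ) : gint (p - q) = gint p - gint q := by
  unfold gint
  simp_rw [eval_sub, mul_sub]
  exact integral_sub (integrable_gauss_poly p) (integrable_gauss_poly q)

lemma gint_smul (c : ℝ) (p : Polynomial ℝ) : gint (C c * p) = c * gint p := by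
  unfold gint
  simp_rw [eval_mul, eval_C, mul_left_comm _ c]
  exact integral_const_mul c _

lemma gint_sq_nonneg (p : Polynomial ℝ) : 0 ≤ gint (p * p) := by
  unfold gint
  apply integral_nonneg
  intro t
  dsimp only [Pi.zero_apply]
  rw [eval_mul, ← pow_two]
  positivity

lemma gint_zero : gint 0 = 0 := by
  unfold gint
  simp

lemma gint_const (c : ℝ) : gint (C c) = Real.sqrt π * c := by
  unfold gint
  simp_rw [eval_C]
  rw [integral_mul_const]
  congr 1
  have := integral_gaussian (1 : ℝ)
  simpa using this

/-- Integration by parts step. -/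
lemma gint_step (n : ℕ) (q : Polynomial ℝ) :
    gint (physHermite (n + 1) * q) = gint (physHermite n * derivative q) := by
  set P := physHermite n * q with hP
  have hd : ∀ t : ℝ, HasDerivAt (fun t : ℝ => Real.exp (-t ^ 2) * P.eval t)
      (Real.exp (-t ^ 2) *
        ((physHermite n * derivative q - physHermite (n + 1) * q).eval t)) t := by
    intro t
    have h1 : HasDerivAt (fun t : ℝ => Real.exp (-t ^ 2)) (Real.exp (-t ^ 2) * -(2 * t)) t := by
      have h : HasDerivAt (fun t : ℝ => -t ^ 2) (-(2 * t)) t := by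
        have := (hasDerivAt_pow 2 t).neg
        simp at this
        exact this
      exact h.exp
    have h2 := P.hasDerivAt t
    have h3 := h1.mul h2
    refine h3.congr_deriv ?_
    rw [hP, derivative_mul, physHermite_rec n]
    simp only [eval_sub, eval_mul, eval_add, eval_ofNat, eval_X, derivative_mul]
    ring
  have hzero := integral_eq_zero_of_hasDerivAt_of_integrable hd
    (integrable_gauss_poly (physHermite n * derivative q - physHermite (n + 1) * q))
    (integrable_gauss_poly P)
  have := gint_sub (physHermite n * derivative q) (physHermite (n + 1) * q)
  unfold gint at this
  rw [hzero] at this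
  unfold gint
  linarith

lemma iterate_derivative_eq (m : ℕ) : ∀ q : Polynomial ℝ, q.natDegree ≤ m →
    derivative^[m] q = C ((m.factorial : ℝ) * q.coeff m) := by
  induction m with
  | zero =>
    intro q hq
    simp only [Function.iterate_zero, id_eq, Nat.factorial_zero, Nat.cast_one, one_mul]
    exact (Polynomial.eq_C_of_natDegree_le_zero hq)
  | succ m ih =>
    intro q hq
    rw [Function.iterate_succ_apply, ih (derivative q) ((natDegree_derivative_le q).trans (by omega)),
      coeff_derivative]
    congr 1
    push_cast [Nat.factorial_succ]
    ring

lemma gint_hermite_mul (m : ℕ) : ∀ q : Polynomial ℝ,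
    gint (physHermite m * q) = gint (derivative^[m] q) := by
  induction m with
  | zero => intro q; simp [physHermite]
  | succ m ih =>
    intro q
    rw [gint_step, ih (derivative q), ← Function.iterate_succ_apply]

lemma gint_hermite_orth (m : ℕ) (q : Polynomial ℝ) (hq : q.natDegree ≤ m) :
    gint (physHermite m * q) = Real.sqrt π * ((m.factorial : ℝ) * q.coeff m) := by
  rw [gint_hermite_mul, iterate_derivative_eq m q hq, gint_const]

lemma gint_hermite_sq (m : ℕ) :
    gint (physHermite m * physHermite m) = Real.sqrt π * ((m.factorial : ℝ) * 2 ^ m) := by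
  obtain ⟨hd, hc⟩ := physHermite_natDegree_coeff m
  rw [gint_hermite_orth m _ hd, hc]

lemma markov_induction : ∀ n : ℕ, ∀ p : Polynomial ℝ, p.natDegree ≤ n →
    gint (derivative p * derivative p) ≤ 2 * n * gint (p * p) := by
  intro n
  induction n with
  | zero =>
    intro p hp
    rw [Polynomial.eq_C_of_natDegree_le_zero hp]
    simp [gint_const, gint_zero]
  | succ n ih =>
    intro p hp
    set c : ℝ := p.coeff (n + 1) / 2 ^ (n + 1) with hc
    set r : Polynomial ℝ := p - C c * physHermite (n + 1) with hr
    obtain ⟨hHd, hHc⟩ := physHermite_natDegree_coeff (n + 1)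
    obtain ⟨hHd', hHc'⟩ := physHermite_natDegree_coeff n
    have hrc : r.coeff (n + 1) = 0 := by
      rw [hr, coeff_sub, coeff_C_mul, hHc, hc]
      field_simp
      ring
    have hrd : r.natDegree ≤ n := by
      rw [Polynomial.natDegree_le_iff_coeff_eq_zero]
      intro N hN
      rcases Nat.lt_or_ge (n + 1) N with h | h
      · rw [hr, coeff_sub, coeff_C_mul,
          coeff_eq_zero_of_natDegree_lt (hp.trans_lt h),
          coeff_eq_zero_of_natDegree_lt (hHd.trans_lt h)]
        ring
      · have : N = n + 1 := by omega
        rw [this]; exact hrc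
    have hpexp : p = C c * physHermite (n + 1) + r := by rw [hr]; ring
    -- expansion of p * p
    have hsq : p * p = C (c * c) * (physHermite (n + 1) * physHermite (n + 1))
        + C (2 * c) * (physHermite (n + 1) * r) + r * r := by
      rw [hpexp]
      simp only [map_mul, map_ofNat]
      ring
    -- derivative expansion
    have hder : derivative p = C (c * (2 * (n + 1))) * physHermite n + derivative r := by
      rw [hpexp, derivative_add, derivative_mul, derivative_C, physHermite_deriv n]
      simp only [map_mul]
      ring
    have hdsq : derivative p * derivative p
        = C ((c * (2 * (n + 1))) * (c * (2 * (n + 1)))) * (physHermite n * physHermite n)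
        + C (2 * (c * (2 * (n + 1)))) * (physHermite n * derivative r) + derivative r * derivative r := by
      rw [hder]
      simp only [map_mul, map_ofNat]
      ring
    have hrd' : (derivative r).natDegree ≤ n := (natDegree_derivative_le r).trans (by omega)
    have hrc' : (derivative r).coeff n = 0 := by
      rw [coeff_derivative, hrc]; ring
    -- cross terms vanish
    have hcross1 : gint (physHermite (n + 1) * r) = 0 := by
      rw [gint_hermite_orth (n + 1) r (hrd.trans (by omega)), hrc]; ring
    have hcross2 : gint (physHermite n * derivative r) = 0 := by
      rw [gint_hermite_orth n (derivative r) hrd', hrc']; ring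
    -- the two squared-integral expansions
    have e1 : gint (p * p) = c * c * (Real.sqrt π * ((n + 1).factorial * 2 ^ (n + 1)))
        + gint (r * r) := by
      rw [hsq, gint_add, gint_add, gint_smul, gint_smul, hcross1, gint_hermite_sq]
      ring
    have e2 : gint (derivative p * derivative p)
        = (c * (2 * (n + 1))) * (c * (2 * (n + 1))) * (Real.sqrt π * (n.factorial * 2 ^ n))
        + gint (derivative r * derivative r) := by
      rw [hdsq, gint_add, gint_add, gint_smul, gint_smul, hcross2, gint_hermite_sq]
      ring
    have key : (c * (2 * (n + 1))) * (c * (2 * (n + 1))) * (Real.sqrt π * (n.factorial * 2 ^ n))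
        = 2 * (n + 1) * (c * c * (Real.sqrt π * ((n + 1).factorial * 2 ^ (n + 1)))) := by
      push_cast [Nat.factorial_succ]
      ring
    have hih := ih r hrd
    have hnn := gint_sq_nonneg r
    rw [e1, e2, key]
    push_cast
    nlinarith [gint_sq_nonneg r]

theorem stmt18 (n : ℕ) :
    (∀ p : Polynomial ℝ, p.natDegree ≤ n →
      (∫ t : ℝ, Real.exp (-t ^ 2) * (p.derivative.eval t) ^ 2) ≤
        2 * n * ∫ t : ℝ, Real.exp (-t ^ 2) * (p.eval t) ^ 2) ∧
    (∫ t : ℝ, Real.exp (-t ^ 2) * ((physHermite n).derivative.eval t) ^ 2) =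
      2 * n * ∫ t : ℝ, Real.exp (-t ^ 2) * ((physHermite n).eval t) ^ 2 := by
  have hconv : ∀ q : Polynomial ℝ,
      (∫ t : ℝ, Real.exp (-t ^ 2) * (q.eval t) ^ 2) = gint (q * q) := by
    intro q
    unfold gint
    simp_rw [eval_mul, pow_two]
  constructor
  · intro p hp
    rw [hconv, hconv]
    exact markov_induction n p hp
  · rw [hconv, hconv]
    cases n with
    | zero => simp [physHermite, gint_const, gint_zero]
    | succ m =>
      rw [physHermite_deriv m]
      have : C (2 * (m + 1) : ℝ) * physHermite m * (C (2 * (m + 1) : ℝ) * physHermite m)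
          = C ((2 * (m + 1)) * (2 * (m + 1)) : ℝ) * (physHermite m * physHermite m) := by
        simp only [map_mul]
        ring
      rw [this, gint_smul, gint_hermite_sq, gint_hermite_sq]
      push_cast [Nat.factorial_succ]
      ring
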